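/- For every Lebesgue measurable set E ⊆ ℝ of positive measure, there exists an ARD set F ⊆ E such that E \ F contains no measurable set of positive measure (equivalently, F is full in E). -/

import Mathlib

open MeasureTheory Cardinal Set Ordinal


lemma aux_continuum_le {K : Set ℝ} (hK : IsClosed K) (h : 0 < volume K) :
    Cardinal.continuum ≤ Cardinal.mk K := by
  have hunc : ¬K.Countable := fun hc => by simp [hc.measure_zero volume] at h
  obtain ⟨f, hfK, -, hfinj⟩ := hK.exists_nat_bool_injection_of_not_countable hunc
  have : #(ℕ → Bool) ≤ #K :=
    Cardinal.mk_le_of_injective (f := fun g => (⟨f g, hfK ⟨g, rfl⟩⟩ : K))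
      (fun a b hab => hfinj (congrArg Subtype.val hab))
  calc Cardinal.continuum = #(ℕ → Bool) := by
        simp [Cardinal.mk_arrow, Cardinal.two_power_aleph0]
    _ ≤ #K := this


lemma aux_open_eq_iUnion {U : Set ℝ} (hU : IsOpen U) :
    U = ⋃ pq ∈ {pq : ℚ × ℚ | Ioo (pq.1 : ℝ) pq.2 ⊆ U}, Ioo (pq.1 : ℝ) pq.2 := by
  ext x
  simp only [mem_iUnion, mem_setOf_eq]
  constructor
  · intro hx
    obtain ⟨ε, hε, hball⟩ := Metric.isOpen_iff.1 hU x hx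
    obtain ⟨p, hp1, hp2⟩ := exists_rat_btwn (show x - ε < x by linarith)
    obtain ⟨q, hq1, hq2⟩ := exists_rat_btwn (show x < x + ε by linarith)
    refine ⟨(p, q), ?_, hp2, hq1⟩
    intro y hy
    apply hball
    rw [Real.ball_eq_Ioo]
    exact ⟨by have := hy.1; simp at *; linarith, by have := hy.2; simp at *; linarith⟩
  · rintro ⟨pq, hsub, hx⟩
    exact hsub hx

lemma aux_card_le (E : Set ℝ) :
    #{K : Set ℝ // IsClosed K ∧ K ⊆ E ∧ 0 < volume K} ≤ Cardinal.continuum := by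
  have hinj : Function.Injective
      (fun K : {K : Set ℝ // IsClosed K ∧ K ⊆ E ∧ 0 < volume K} =>
        {pq : ℚ × ℚ | Ioo (pq.1 : ℝ) pq.2 ⊆ (K.1)ᶜ}) := by
    intro K J h
    apply Subtype.ext
    have hK := aux_open_eq_iUnion K.2.1.isOpen_compl
    have hJ := aux_open_eq_iUnion J.2.1.isOpen_compl
    have : (K.1)ᶜ = (J.1)ᶜ := by simp only at h; rw [hK, hJ, h]
    simpa using congrArg compl this
  calc #{K : Set ℝ // IsClosed K ∧ K ⊆ E ∧ 0 < volume K}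
      ≤ #(Set (ℚ × ℚ)) := Cardinal.mk_le_of_injective hinj
    _ ≤ Cardinal.continuum := by
        rw [Cardinal.mk_set]
        simp [Cardinal.two_power_aleph0]


def ARD (B : Set ℝ) : Prop := ∀ x ∈ B, ∀ y ∈ B, x ≠ y → Irrational |x - y|

theorem stmt6 (E : Set ℝ) (hE : MeasurableSet E) (hpos : 0 < volume E) :
    ∃ F ⊆ E, ARD F ∧ ∀ M : Set ℝ, MeasurableSet M → M ⊆ E \ F → volume M = 0 := by
  classical
  set ι := {K : Set ℝ // IsClosed K ∧ K ⊆ E ∧ 0 < volume K} with hι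
  obtain ⟨r, wo, hr⟩ := Cardinal.ord_eq ι
  -- key existence lemma
  have key : ∀ (K : ι) (g : ∀ J, r J K → ℝ),
      ∃ z, z ∈ K.1 ∧ ∀ J (h : r J K) (q : ℚ), z - g J h ≠ (q : ℝ) := by
    intro K g
    set Bad := {z : ℝ | ∃ J, ∃ h : r J K, ∃ q : ℚ, z = g J h + (q : ℝ)} with hBad
    have hsurj : Function.Surjective
        (fun p : {J // r J K} × ℚ => (⟨g p.1.1 p.1.2 + (p.2 : ℝ), p.1.1, p.1.2, p.2, rfl⟩ : Bad)) := by
      rintro ⟨z, J, h, q, rfl⟩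
      exact ⟨(⟨J, h⟩, q), rfl⟩
    have hcard : #Bad < Cardinal.continuum := by
      have h1 : #Bad ≤ #({J // r J K} × ℚ) := Cardinal.mk_le_of_surjective hsurj
      have h2 : #({J // r J K} × ℚ) = #{J // r J K} * ℵ₀ := by
        rw [Cardinal.mk_prod]; simp
      have h3 : #{J // r J K} < Cardinal.continuum := by
        rw [← Ordinal.card_typein]
        exact (Cardinal.card_typein_lt (r := r) K hr).trans_le (aux_card_le E)
      calc #Bad ≤ #{J // r J K} * ℵ₀ := h1.trans h2.le
        _ < Cardinal.continuum :=
          Cardinal.mul_lt_of_lt Cardinal.aleph0_le_continuum h3 Cardinal.aleph0_lt_continuum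
    have hKcard : Cardinal.continuum ≤ #K.1 := aux_continuum_le K.2.1 K.2.2.2
    have hns : ¬(K.1 ⊆ Bad) := by
      intro hsub
      exact absurd (Cardinal.mk_le_mk_of_subset hsub) (not_le.2 (hcard.trans_le hKcard))
    obtain ⟨z, hzK, hzB⟩ := not_subset.1 hns
    refine ⟨z, hzK, fun J h q hq => hzB ⟨J, h, q, by linarith⟩⟩
  -- recursion
  let x : ι → ℝ := wo.wf.fix fun K ih => Classical.choose (key K ih)
  have hx : ∀ K : ι, x K ∈ K.1 ∧ ∀ J (h : r J K) (q : ℚ), x K - x J ≠ (q : ℝ) := by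
    intro K
    have hfix : x K = Classical.choose (key K (fun J _ => x J)) :=
      wo.wf.fix_eq _ K
    have := Classical.choose_spec (key K (fun J _ => x J))
    rw [← hfix] at this
    exact ⟨this.1, fun J h q => this.2 J h q⟩
  refine ⟨Set.range x, ?_, ?_, ?_⟩
  · rintro _ ⟨K, rfl⟩; exact K.2.2.1 (hx K).1
  · rintro _ ⟨K, rfl⟩ _ ⟨J, rfl⟩ hne
    have hdiff : ∀ {A B : ι}, r B A → Irrational (x A - x B) := by
      intro A B h
      rw [Irrational]
      rintro ⟨q, hq⟩
      exact (hx A).2 B h q hq.symm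
    rcases trichotomous (r := r) J K with h | h | h
    · rcases abs_cases (x K - x J) with ⟨he, -⟩ | ⟨he, -⟩
      · rw [he]; exact hdiff h
      · rw [he]; exact (hdiff h).neg
    · exact absurd (congrArg x h.symm) hne
    · rcases abs_cases (x K - x J) with ⟨he, -⟩ | ⟨he, -⟩
      · rw [he, show x K - x J = -(x J - x K) by ring]; exact (hdiff h).neg
      · rw [he, neg_sub]; exact hdiff h
  · intro M hM hMsub
    by_contra hM0
    have hMpos : 0 < volume M := pos_iff_ne_zero.2 hM0
    -- find n with positive measure intersection with a bounded interval
    have hcover : M = ⋃ n : ℕ, M ∩ Icc (-(n : ℝ)) n := by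
      ext y; simp only [mem_iUnion, mem_inter_iff, mem_Icc]
      constructor
      · intro hy
        obtain ⟨n, hn⟩ := exists_nat_ge |y|
        rcases abs_le.1 hn with ⟨h1, h2⟩
        exact ⟨n, hy, h1, h2⟩
      · rintro ⟨n, hy, -⟩; exact hy
    have hex : ∃ n : ℕ, 0 < volume (M ∩ Icc (-(n : ℝ)) n) := by
      by_contra h
      push_neg at h
      have h0 : ∀ n : ℕ, volume (M ∩ Icc (-(n : ℝ)) n) = 0 :=
        fun n => le_antisymm (h n) zero_le
      have : volume M = 0 := by
        rw [hcover]
        exact le_antisymm ((measure_iUnion_le _).trans (by simp [h0])) zero_le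
      exact hM0 this
    obtain ⟨n, hn⟩ := hex
    set A := M ∩ Icc (-(n : ℝ)) n with hA
    have hAm : MeasurableSet A := hM.inter measurableSet_Icc
    have hAfin : volume A ≠ ⊤ :=
      ((measure_mono inter_subset_right).trans_lt measure_Icc_lt_top).ne
    obtain ⟨K, hKA, hKcomp, hKlt⟩ := hAm.exists_isCompact_lt_add hAfin hn.ne'
    have hKpos : 0 < volume K := by
      rcases eq_or_ne (volume K) 0 with h0 | h0
      · rw [h0, zero_add] at hKlt; exact absurd hKlt (lt_irrefl _)
      · exact pos_iff_ne_zero.2 h0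
    have hKM : K ⊆ M := hKA.trans inter_subset_left
    have hKE : K ⊆ E := fun z hz => (hMsub (hKM hz)).1
    set Kι : ι := ⟨K, hKcomp.isClosed, hKE, hKpos⟩ with hKι
    have hxK : x Kι ∈ K := (hx Kι).1
    exact (hMsub (hKM hxK)).2 ⟨Kι, rfl⟩
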